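/- Let p be a prime, m, n integers both greater than 1, F : F_{p^n} → F_{p^m}, and σ : F_{p^m} → Z/p^mZ any map. Then F is 0-differential bent₂ (equivalently, perfect₂ 0-nonlinear) if and only if W_F(0) = 0, i.e., ∑_{x ∈ F_{p^n}} ζ_{p^m}^{σ(F(x))} = 0. -/

import Mathlib

open Finset

noncomputable section

/-- Finite fields `GaloisField p n` are finite; fix a `Fintype` instance. -/
noncomputable instance (p n : ℕ) [Fact p.Prime] : Fintype (GaloisField p n) :=
  Fintype.ofFinite _

/-- `ζ_q = exp(2πi/q)`. -/
noncomputable def zetaC (q : ℕ) : ℂ := Complex.exp (2 * Real.pi * Complex.I / q)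

/-- `ζ_p^t` for `t ∈ F_p`, computed via the integer lift of `t`. -/
noncomputable def eChar (p : ℕ) (t : ZMod p) : ℂ := zetaC p ^ t.val

/-- `ζ_q^s` for `s ∈ Z/qZ`, computed via the integer lift of `s`. -/
noncomputable def eCharM (q : ℕ) (s : ZMod q) : ℂ := zetaC q ^ s.val

/-- The absolute trace `Tr_k : F_{p^k} → F_p`. -/
noncomputable def trAbs (p k : ℕ) [Fact p.Prime] (x : GaloisField p k) : ZMod p :=
  Algebra.trace (ZMod p) (GaloisField p k) x

/-- The second-kind Walsh transform
`W_H(a) = ∑_x ζ_{p^m}^{σ(H(x))}·ζ_p^{−Tr_n(a·x)}`. -/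
noncomputable def Walsh2 (p n m : ℕ) [Fact p.Prime] (σ : GaloisField p m → ZMod (p ^ m))
    (H : GaloisField p n → GaloisField p m) (a : GaloisField p n) : ℂ :=
  ∑ x : GaloisField p n, eCharM (p ^ m) (σ (H x)) * eChar p (-(trAbs p n (a * x)))

/-- The second-kind `c`-crosscorrelation
`cC_{F,G}(u) = ∑_x ζ_{p^m}^{σ(F(x+u)) − σ(c·G(x))}`, the difference of exponents
taken in `Z/p^mZ`. -/
noncomputable def crossCorr2 (p n m : ℕ) [Fact p.Prime] (σ : GaloisField p m → ZMod (p ^ m))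
    (F G : GaloisField p n → GaloisField p m) (c : GaloisField p m)
    (u : GaloisField p n) : ℂ :=
  ∑ x : GaloisField p n, eCharM (p ^ m) (σ (F (x + u)) - σ (c * G x))

/-- The second-kind `c`-autocorrelation `cC_F = cC_{F,F}`. -/
noncomputable def autoCorr2 (p n m : ℕ) [Fact p.Prime] (σ : GaloisField p m → ZMod (p ^ m))
    (F : GaloisField p n → GaloisField p m) (c : GaloisField p m)
    (u : GaloisField p n) : ℂ :=
  crossCorr2 p n m σ F F c u

/-- `F` is perfect₂ `c`-nonlinear: `cC_F(u) = 0` for all `u ≠ 0`. -/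
def PerfectCNonlinear2 (p n m : ℕ) [Fact p.Prime] (σ : GaloisField p m → ZMod (p ^ m))
    (F : GaloisField p n → GaloisField p m) (c : GaloisField p m) : Prop :=
  ∀ u : GaloisField p n, u ≠ 0 → autoCorr2 p n m σ F c u = 0

/-- `F` is strictly perfect₂ `c`-nonlinear: additionally `cC_F(0) = 0`. -/
def StrictlyPerfectCNonlinear2 (p n m : ℕ) [Fact p.Prime] (σ : GaloisField p m → ZMod (p ^ m))
    (F : GaloisField p n → GaloisField p m) (c : GaloisField p m) : Prop :=
  PerfectCNonlinear2 p n m σ F c ∧ autoCorr2 p n m σ F c 0 = 0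

/-- `F` is `c`-differential bent₂: `W_F(x)·conj(W_{cF}(x)) = cC_F(0)` for all `x`,
where `cF` is the map `x ↦ c·F(x)`. -/
def CDifferentialBent2 (p n m : ℕ) [Fact p.Prime] (σ : GaloisField p m → ZMod (p ^ m))
    (F : GaloisField p n → GaloisField p m) (c : GaloisField p m) : Prop :=
  ∀ x : GaloisField p n,
    Walsh2 p n m σ F x * (starRingEnd ℂ) (Walsh2 p n m σ (fun y => c * F y) x) =
      autoCorr2 p n m σ F c 0


lemma zetaC_ne_zero (q : ℕ) : zetaC q ≠ 0 := Complex.exp_ne_zero _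

lemma zetaC_pow_self (q : ℕ) (hq : q ≠ 0) : zetaC q ^ q = 1 := by
  rw [zetaC, ← Complex.exp_nat_mul]
  have hq' : (q : ℂ) ≠ 0 := Nat.cast_ne_zero.mpr hq
  have h : (q : ℂ) * (2 * Real.pi * Complex.I / q) = 2 * Real.pi * Complex.I := by
    field_simp
  rw [h, Complex.exp_two_pi_mul_I]

lemma eCharM_add (q : ℕ) [NeZero q] (a b : ZMod q) :
    eCharM q (a + b) = eCharM q a * eCharM q b := by
  rw [eCharM, eCharM, eCharM, ZMod.val_add, ← pow_add,
    ← pow_eq_pow_mod _ (zetaC_pow_self q (NeZero.ne q))]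

lemma eCharM_zero (q : ℕ) [NeZero q] : eCharM q 0 = 1 := by
  rw [eCharM, ZMod.val_zero, pow_zero]

lemma eCharM_ne_zero (q : ℕ) (s : ZMod q) : eCharM q s ≠ 0 :=
  pow_ne_zero _ (zetaC_ne_zero q)

lemma eCharM_eq_one_iff (q : ℕ) [NeZero q] (s : ZMod q) :
    eCharM q s = 1 ↔ s = 0 := by
  constructor
  · intro h
    have hprim := Complex.isPrimitiveRoot_exp q (NeZero.ne q)
    have hd := (IsPrimitiveRoot.pow_eq_one_iff_dvd hprim s.val).mp h
    have hv : s.val = 0 := Nat.eq_zero_of_dvd_of_lt hd (ZMod.val_lt s)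
    exact (ZMod.val_eq_zero s).mp hv
  · rintro rfl; exact eCharM_zero q

lemma conj_zetaC_mul (q : ℕ) : (starRingEnd ℂ) (zetaC q) * zetaC q = 1 := by
  rw [zetaC, ← Complex.exp_conj, ← Complex.exp_add]
  have h : (starRingEnd ℂ) (2 * Real.pi * Complex.I / q) +
      2 * Real.pi * Complex.I / q = 0 := by
    simp [map_div₀, Complex.conj_I, map_ofNat]
    ring
  rw [h, Complex.exp_zero]

lemma conj_eCharM_mul (q : ℕ) (s : ZMod q) :
    (starRingEnd ℂ) (eCharM q s) * eCharM q s = 1 := by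
  rw [eCharM, map_pow, ← mul_pow, conj_zetaC_mul, one_pow]

lemma eChar_eq_eCharM (p : ℕ) (t : ZMod p) : eChar p t = eCharM p t := rfl

theorem statement_16 (p n m : ℕ) [Fact p.Prime] (hn : 1 < n) (hm : 1 < m)
    (F : GaloisField p n → GaloisField p m)
    (σ : GaloisField p m → ZMod (p ^ m)) :
    (CDifferentialBent2 p n m σ F 0 ↔ Walsh2 p n m σ F 0 = 0) ∧
    (PerfectCNonlinear2 p n m σ F 0 ↔ Walsh2 p n m σ F 0 = 0) ∧
    (Walsh2 p n m σ F 0 = 0 ↔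
      ∑ x : GaloisField p n, eCharM (p ^ m) (σ (F x)) = 0) := by
  have hp : p.Prime := Fact.out
  haveI : NeZero p := ⟨hp.ne_zero⟩
  haveI : NeZero (p ^ m) := ⟨pow_ne_zero m hp.ne_zero⟩
  set S : ℂ := ∑ x : GaloisField p n, eCharM (p ^ m) (σ (F x)) with hS
  set z : ℂ := eCharM (p ^ m) (-(σ 0)) with hz
  set w : ℂ := eCharM (p ^ m) (σ 0) with hw
  have hz0 : z ≠ 0 := eCharM_ne_zero (p ^ m) _
  have hwz : w * z = 1 := by
    rw [hw, hz, ← eCharM_add, add_neg_cancel, eCharM_zero]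
  -- Walsh at 0
  have htr0 : trAbs p n (0 : GaloisField p n) = 0 := by
    simp [trAbs]
  have hW0 : Walsh2 p n m σ F 0 = S := by
    rw [Walsh2, hS]
    refine Finset.sum_congr rfl fun x _ => ?_
    rw [zero_mul, htr0, neg_zero, eChar_eq_eCharM, eCharM_zero, mul_one]
  -- autocorrelation
  have hAC : ∀ u : GaloisField p n, autoCorr2 p n m σ F 0 u = S * z := by
    intro u
    rw [autoCorr2, crossCorr2]
    have step1 : ∀ x : GaloisField p n,
        eCharM (p ^ m) (σ (F (x + u)) - σ (0 * F x))
          = eCharM (p ^ m) (σ (F (x + u))) * z := by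
      intro x
      rw [zero_mul, sub_eq_add_neg, eCharM_add, hz]
    rw [Finset.sum_congr rfl fun x _ => step1 x, ← Finset.sum_mul]
    congr 1
    exact Fintype.sum_equiv (Equiv.addRight u)
      (fun x => eCharM (p ^ m) (σ (F (x + u)))) (fun x => eCharM (p ^ m) (σ (F x)))
      (fun x => rfl)
  -- the component sum T
  set T : GaloisField p n → ℂ :=
    fun a => ∑ y : GaloisField p n, eChar p (-(trAbs p n (a * y))) with hT
  have hWc : ∀ a : GaloisField p n,
      Walsh2 p n m σ (fun y => (0 : GaloisField p m) * F y) a = w * T a := by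
    intro a
    rw [Walsh2, hT, Finset.mul_sum]
    refine Finset.sum_congr rfl fun x _ => ?_
    rw [zero_mul, hw]
  have hT0 : T 0 = (Fintype.card (GaloisField p n) : ℂ) := by
    rw [hT]
    simp only [zero_mul, htr0, neg_zero, eChar_eq_eCharM, eCharM_zero]
    rw [Finset.sum_const, Finset.card_univ, nsmul_eq_mul, mul_one]
  have hTx : ∀ a : GaloisField p n, a ≠ 0 → T a = 0 := by
    intro a ha
    have hnd := traceForm_nondegenerate (ZMod p) (GaloisField p n)
    have hex : ∃ b : GaloisField p n,
        Algebra.trace (ZMod p) (GaloisField p n) (a * b) ≠ 0 := by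
      by_contra! hf
      exact ha (hnd.1 a fun b => by simpa [Algebra.traceForm_apply] using hf b)
    obtain ⟨b, hb⟩ := hex
    set f : GaloisField p n → ℂ := fun y => eChar p (-(trAbs p n (a * y))) with hf
    have hadd : ∀ y y' : GaloisField p n, f (y + y') = f y * f y' := by
      intro y y'
      rw [hf]
      simp only
      rw [eChar_eq_eCharM, eChar_eq_eCharM, eChar_eq_eCharM, ← eCharM_add]
      congr 1
      have h2 : trAbs p n (a * (y + y')) = trAbs p n (a * y) + trAbs p n (a * y') := by
        rw [mul_add]; exact map_add _ _ _
      rw [h2]; ring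
    have hfb : f b ≠ 1 := by
      rw [hf]
      simp only
      rw [eChar_eq_eCharM]
      intro h
      have h' := (eCharM_eq_one_iff p _).mp h
      exact hb (by simpa [trAbs] using neg_eq_zero.mp h')
    have key : f b * T a = T a := by
      rw [hT, Finset.mul_sum]
      have h3 : ∀ y : GaloisField p n,
          f b * eChar p (-(trAbs p n (a * y))) = f (b + y) := by
        intro y; rw [hadd]
      rw [Finset.sum_congr rfl fun y _ => h3 y]
      exact Fintype.sum_equiv (Equiv.addLeft b) (fun y => f (b + y)) f (fun y => rfl)
    have h4 : (f b - 1) * T a = 0 := by rw [sub_mul, one_mul, key, sub_self]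
    rcases mul_eq_zero.mp h4 with h | h
    · exact absurd (sub_eq_zero.mp h) hfb
    · exact h
  have hcw : (starRingEnd ℂ) w = z := by
    have h1 : (starRingEnd ℂ) w * w = 1 := conj_eCharM_mul (p ^ m) _
    calc (starRingEnd ℂ) w = (starRingEnd ℂ) w * (w * z) := by rw [hwz, mul_one]
      _ = ((starRingEnd ℂ) w * w) * z := by ring
      _ = z := by rw [h1, one_mul]
  have hcard : (1 : ℕ) < Fintype.card (GaloisField p n) := Fintype.one_lt_card
  -- main equivalences
  have hiff1 : CDifferentialBent2 p n m σ F 0 ↔ S = 0 := by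
    constructor
    · intro hB
      have h0 := hB 0
      rw [hW0, hAC 0, hWc 0, hT0, map_mul, hcw, Complex.conj_natCast] at h0
      have h5 : S * z * ((Fintype.card (GaloisField p n) : ℂ) - 1) = 0 := by
        linear_combination h0
      rcases mul_eq_zero.mp h5 with h | h
      · rcases mul_eq_zero.mp h with h' | h'
        · exact h'
        · exact absurd h' hz0
      · exfalso
        have h6 : (Fintype.card (GaloisField p n) : ℂ) = 1 := by linear_combination h
        have h7 : Fintype.card (GaloisField p n) = 1 := by exact_mod_cast h6
        omega
    · intro hS0
      intro x
      rw [hAC 0, hS0, zero_mul]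
      rcases eq_or_ne x 0 with rfl | hx
      · rw [hW0, hS0, zero_mul]
      · rw [hWc x, hTx x hx, mul_zero, map_zero, mul_zero]
  have hiff2 : PerfectCNonlinear2 p n m σ F 0 ↔ S = 0 := by
    constructor
    · intro hP
      have h8 := hP 1 one_ne_zero
      rw [hAC 1] at h8
      rcases mul_eq_zero.mp h8 with h | h
      · exact h
      · exact absurd h hz0
    · intro hS0 u _
      rw [hAC u, hS0, zero_mul]
  refine ⟨?_, ?_, ?_⟩
  · rw [hW0]; exact hiff1
  · rw [hW0]; exact hiff2
  · rw [hW0]
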